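/- For any positive integer w, any x ∈ R and n ≥ 0: w^n · Σ_{i=0}^{w−1} q^i · B_{n,q^w}(x + i/w) = Σ_{k=0}^n C(n,k) · B_{k,q^w}(x) · S_{n−k,q}(w − 1) · w^k. -/

import Mathlib

open Finset

/-- The q-analogue of power sums: `S_{k,q}(m) = Σ_{i=0}^m i^k q^i` (with `0^0 = 1`). -/
def qS {R : Type*} [CommRing R] (q : R) (k m : ℕ) : R :=
  ∑ i ∈ Finset.range (m + 1), (i : R) ^ k * q ^ i

/-- q-Bernoulli numbers `b_n(q, L)`: `(q-1) b_0 = L` and for `n ≥ 1`,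
`(q-1) b_n = [n = 1] - q Σ_{k<n} C(n,k) b_k`. -/
noncomputable def qb {R : Type*} [CommRing R] (q L : R) : ℕ → R
  | 0 => Ring.inverse (q - 1) * L
  | n + 1 =>
      Ring.inverse (q - 1) *
        ((if n + 1 = 1 then (1 : R) else 0) -
          q * ∑ k ∈ (Finset.range (n + 1)).attach,
              ((n + 1).choose k.1 : R) * qb q L k.1)
  termination_by n => n
  decreasing_by exact Finset.mem_range.mp k.2

/-- q-Bernoulli polynomials `B_{n,q}(x) = Σ_{k=0}^n C(n,k) b_k(q,L) x^{n-k}`. -/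
noncomputable def qB {R : Type*} [CommRing R] (q L : R) (n : ℕ) (x : R) : R :=
  ∑ k ∈ Finset.range (n + 1), (n.choose k : R) * qb q L k * x ^ (n - k)

/-- Appell binomial identity for the q-Bernoulli polynomials. -/
lemma qB_add {R : Type*} [CommRing R] (q L : R) (n : ℕ) (x y : R) :
    qB q L n (x + y) = ∑ k ∈ Finset.range (n + 1),
      (n.choose k : R) * qB q L k x * y ^ (n - k) := by
  unfold qB
  simp_rw [add_pow, Finset.mul_sum, Finset.sum_mul]
  rw [Finset.sum_sigma', Finset.sum_sigma']
  refine Finset.sum_nbij' (i := fun p => ⟨p.1 + p.2, p.1⟩)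
    (j := fun p => ⟨p.2, p.1 - p.2⟩) ?_ ?_ ?_ ?_ ?_
  · rintro ⟨j, m⟩ h
    simp only [Finset.mem_sigma, Finset.mem_range] at h ⊢
    omega
  · rintro ⟨k, j⟩ h
    simp only [Finset.mem_sigma, Finset.mem_range] at h ⊢
    omega
  · rintro ⟨j, m⟩ h
    simp
  · rintro ⟨k, j⟩ h
    simp only [Finset.mem_sigma, Finset.mem_range] at h
    simp only [Sigma.mk.inj_iff]
    constructor
    · omega
    · exact heq_of_eq rfl
  · rintro ⟨j, m⟩ h
    simp only [Finset.mem_sigma, Finset.mem_range] at h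
    have hj : j ≤ n := by omega
    have hm : j + m ≤ n := by omega
    have hc : (n.choose (j + m)) * ((j + m).choose j) = (n.choose j) * ((n - j).choose m) := by
      have := Nat.choose_mul (n := n) (k := j + m) (s := j) (Nat.le_add_right _ _)
      simpa using this
    have h1 : j + m - j = m := by omega
    have h2 : n - j - m = n - (j + m) := by omega
    have hc' : ((n.choose (j + m) : R)) * ((j + m).choose j)
        = (n.choose j : R) * ((n - j).choose m) := by
      exact_mod_cast congrArg (Nat.cast : ℕ → R) hc
    simp only [h1, h2, Nat.add_comm m j]
    linear_combination (-(qb q L j * x ^ m * y ^ (n - (j + m)))) * hc'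

theorem qBernoulli_mult_eq_powersum {R : Type*} [CommRing R] [Algebra ℚ R] (q L : R)
    (hq : ∀ w : ℕ, 0 < w → IsUnit (q ^ w - 1)) (w : ℕ) (hw : 0 < w) (x : R) (n : ℕ) :
    (w : R) ^ n * ∑ i ∈ Finset.range w, q ^ i *
        qB (q ^ w) ((w : R) * L) n (x + algebraMap ℚ R ((i : ℚ) / (w : ℚ)))
      = ∑ k ∈ Finset.range (n + 1), (n.choose k : R) * qB (q ^ w) ((w : R) * L) k x *
          qS q (n - k) (w - 1) * (w : R) ^ k := by
  have hwR : ∀ i : ℕ, (w : R) * algebraMap ℚ R ((i : ℚ) / (w : ℚ)) = (i : R) := by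
    intro i
    have hw0 : (w : ℚ) ≠ 0 := by exact_mod_cast hw.ne'
    have : (w : R) = algebraMap ℚ R (w : ℚ) := by simp
    rw [this, ← map_mul, mul_div_cancel₀ _ hw0, map_natCast]
  simp_rw [qB_add]
  simp_rw [Finset.mul_sum]
  rw [Finset.sum_comm]
  refine Finset.sum_congr rfl fun k hk => ?_
  simp only [Finset.mem_range] at hk
  have hkn : k ≤ n := by omega
  rw [qS]
  have hww : w - 1 + 1 = w := by omega
  rw [hww]
  simp_rw [Finset.mul_sum, Finset.sum_mul]
  refine Finset.sum_congr rfl fun i hi => ?_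
  have key : (w : R) ^ n * (algebraMap ℚ R ((i : ℚ) / (w : ℚ))) ^ (n - k)
      = (i : R) ^ (n - k) * (w : R) ^ k := by
    have : (w : R) ^ n = (w : R) ^ (n - k) * (w : R) ^ k := by
      rw [← pow_add]; congr 1; omega
    rw [this, mul_comm ((w : R) ^ (n - k)), mul_assoc, ← mul_pow, hwR, mul_comm]
  linear_combination (q ^ i * (n.choose k : R) * qB (q ^ w) ((w : R) * L) k x) * key
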